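/- For every sequence ⟨B_α : α < ω₁⟩ of Borel subsets of [ω]^ω (the space of infinite subsets of ℕ, as a subspace of 2^ω), there exists a sequence ⟨y_α : α < ω₁⟩ of infinite subsets of ℕ such that: (1) for all α < β < ω₁, y_β ⊆* y_α and y_β ≠* y_α (i.e., y_β \ y_α is finite but y_α \ y_β is infinite); and (2) for each α < ω₁, either y_α ∉ B_α or [y_α]^{*ω} ⊆ B_α, where [y]^{*ω} = {x ∈ [ω]^ω : x ⊆* y}. -/

import Mathlib

open MeasureTheory Set

/-- The subset of `ℕ` coded by an element of `2^ω`. -/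
def bset (u : ℕ → Bool) : Set ℕ := {n | u n = true}

namespace GPaux

lemma exists_chain {σ : Type*} (Inv : σ → Prop) (R : σ → σ → Prop) (x0 : σ) (h0 : Inv x0)
    (step : ∀ x, Inv x → ∃ y, R x y ∧ Inv y) :
    ∃ f : ℕ → σ, f 0 = x0 ∧ (∀ n, Inv (f n)) ∧ (∀ n, R (f n) (f (n+1))) := by
  choose g hg1 hg2 using step
  let F : ℕ → {x : σ // Inv x} := fun n => Nat.rec ⟨x0, h0⟩ (fun _ p => ⟨g p.1 p.2, hg2 p.1 p.2⟩) n
  exact ⟨fun n => (F n).1, rfl, fun n => (F n).2, fun n => hg1 _ _⟩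

def cube (s : Finset ℕ) (A : Set ℕ) : Set (ℕ → Bool) :=
  {x | (bset x).Infinite ∧ ↑s ⊆ bset x ∧ bset x ⊆ ↑s ∪ A}

lemma cube_mono {A B : Set ℕ} (h : A ⊆ B) (s : Finset ℕ) : cube s A ⊆ cube s B :=
  fun _ ⟨h1, h2, h3⟩ => ⟨h1, h2, h3.trans (union_subset_union_right _ h)⟩

def accepts (U : Set (ℕ → Bool)) (s : Finset ℕ) (A : Set ℕ) : Prop := cube s A ⊆ U

def rejects (U : Set (ℕ → Bool)) (s : Finset ℕ) (A : Set ℕ) : Prop :=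
  ∀ B ⊆ A, B.Infinite → ¬ accepts U s B

lemma accepts_mono {U s} {A B : Set ℕ} (h : B ⊆ A) (hA : accepts U s A) : accepts U s B :=
  (cube_mono h s).trans hA

lemma rejects_mono {U s} {A B : Set ℕ} (h : B ⊆ A) (hA : rejects U s A) : rejects U s B :=
  fun C hC => hA C (hC.trans h)

lemma decide_one (U : Set (ℕ → Bool)) (s : Finset ℕ) {A : Set ℕ} (hA : A.Infinite) :
    ∃ B ⊆ A, B.Infinite ∧ (accepts U s B ∨ rejects U s B) := by
  by_cases h : rejects U s A
  · exact ⟨A, subset_rfl, hA, Or.inr h⟩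
  · simp only [rejects, not_forall, not_not, exists_prop] at h
    obtain ⟨B, hBA, hBinf, hacc⟩ := h
    exact ⟨B, hBA, hBinf, Or.inl hacc⟩

lemma inter_Ioi_infinite {A : Set ℕ} (hA : A.Infinite) (c : ℕ) : (A ∩ Ioi c).Infinite := by
  have : A \ Iic c = A ∩ Ioi c := by ext x; simp [not_le]
  simpa [this] using hA.diff (finite_Iic c)

lemma decide_finset (U : Set (ℕ → Bool)) (T : Finset (Finset ℕ)) {A : Set ℕ} (hA : A.Infinite) :
    ∃ B ⊆ A, B.Infinite ∧ ∀ t ∈ T, accepts U t B ∨ rejects U t B := by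
  classical
  induction T using Finset.induction_on with
  | empty => exact ⟨A, subset_rfl, hA, by simp⟩
  | insert _ _ hnot ih =>
    obtain ⟨B, hBA, hBinf, hB⟩ := ih
    obtain ⟨C, hCB, hCinf, hC⟩ := decide_one U _ hBinf
    refine ⟨C, hCB.trans hBA, hCinf, ?_⟩
    intro t ht
    rcases Finset.mem_insert.mp ht with rfl | ht
    · exact hC
    · rcases hB t ht with h | h
      · exact Or.inl (accepts_mono hCB h)
      · exact Or.inr (rejects_mono hCB h)

lemma extend_reject (U : Set (ℕ → Bool)) {A : Set ℕ} (hA : A.Infinite) (T : Finset (Finset ℕ))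
    (hrej : ∀ t ∈ T, rejects U t A) :
    ∃ B ⊆ A, B.Infinite ∧ ∀ a ∈ B, ∀ t ∈ T, rejects U (insert a t) (B ∩ Ioi a) := by
  classical
  set Inv : ℕ × Set ℕ → Prop := fun p => p.2.Infinite ∧ p.2 ⊆ A with hInvdef
  set R : ℕ × Set ℕ → ℕ × Set ℕ → Prop := fun p q =>
    q.1 = sInf p.2 ∧ q.2 ⊆ p.2 ∩ Ioi q.1 ∧
      ∀ t ∈ T, accepts U (insert q.1 t) q.2 ∨ rejects U (insert q.1 t) q.2 with hRdef
  have step : ∀ p, Inv p → ∃ q, R p q ∧ Inv q := by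
    rintro ⟨c, A'⟩ ⟨hinf, hsubA⟩
    set c' := sInf A' with hc'
    obtain ⟨B, hB1, hB2, hB3⟩ := decide_finset U (T.image (insert c')) (inter_Ioi_infinite hinf c')
    refine ⟨(c', B), ⟨rfl, hB1, ?_⟩, hB2, hB1.trans ((inter_subset_left).trans hsubA)⟩
    intro t ht
    exact hB3 _ (Finset.mem_image_of_mem _ ht)
  obtain ⟨f, hf0, hInv, hR⟩ := exists_chain Inv R (0, A) ⟨hA, subset_rfl⟩ step
  set a : ℕ → ℕ := fun n => (f (n+1)).1 with ha
  have hsub : ∀ n, (f (n+1)).2 ⊆ (f n).2 := fun n => ((hR n).2.1).trans inter_subset_left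
  have chain : ∀ k j, k ≤ j → (f j).2 ⊆ (f k).2 := by
    intro k j hkj
    induction j, hkj using Nat.le_induction with
    | base => exact subset_rfl
    | succ n hn ih => exact (hsub n).trans ih
  have hmemf : ∀ n, a n ∈ (f n).2 := by
    intro n; rw [ha]; simp only [(hR n).1]
    exact Nat.sInf_mem (hInv n).1.nonempty
  have haA : ∀ n, a n ∈ A := fun n => (hInv n).2 (hmemf n)
  have hmono : StrictMono a := by
    apply strictMono_nat_of_lt_succ
    intro n
    exact ((hR n).2.1 (hmemf (n+1))).2
  have hjk : ∀ j k, k < j → a j ∈ (f (k+1)).2 := fun j k hkj => chain (k+1) j hkj (hmemf j)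
  by_cases hgood : {k | ∀ t ∈ T, rejects U (insert (a k) t) ((f (k+1)).2)}.Infinite
  · refine ⟨a '' {k | ∀ t ∈ T, rejects U (insert (a k) t) ((f (k+1)).2)},
      ?_, hgood.image (hmono.injective.injOn), ?_⟩
    · rintro x ⟨k, _, rfl⟩; exact haA k
    · rintro x ⟨k, hk, rfl⟩ t ht
      refine rejects_mono ?_ (hk t ht)
      rintro y ⟨⟨j, _, rfl⟩, hy⟩
      exact hjk j k (hmono.lt_iff_lt.mp hy)
  · exfalso
    have hbad : {k | ∃ t ∈ T, accepts U (insert (a k) t) ((f (k+1)).2)}.Infinite := by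
      refine Set.Infinite.mono ?_ ((Set.not_infinite.mp hgood).infinite_compl)
      intro k hk
      simp only [mem_compl_iff, mem_setOf_eq, not_forall] at hk
      obtain ⟨t, ht, hrt⟩ := hk
      rcases (hR k).2.2 t ht with h | h
      · exact ⟨t, ht, h⟩
      · exact absurd h hrt
    have : ∃ t ∈ T, {k | accepts U (insert (a k) t) ((f (k+1)).2)}.Infinite := by
      by_contra hcon
      push_neg at hcon
      apply hbad
      refine Set.Finite.subset (Set.Finite.biUnion T.finite_toSet
        (fun t ht => hcon t ht)) ?_
      rintro k ⟨t, ht, hacc⟩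
      exact Set.mem_biUnion ht hacc
    obtain ⟨t, htT, hM⟩ := this
    set M := {k | accepts U (insert (a k) t) ((f (k+1)).2)} with hMdef
    refine hrej t htT (a '' M) (by rintro x ⟨k, _, rfl⟩; exact haA k)
      (hM.image (hmono.injective.injOn)) ?_
    rintro x ⟨hxinf, hxt, hxsub⟩
    have hne : (bset x \ ↑t).Nonempty := by
      rcases Set.eq_empty_or_nonempty (bset x \ ↑t) with h | h
      · exact absurd (t.finite_toSet.subset (diff_eq_empty.mp h)) hxinf
      · exact h
    set q := sInf (bset x \ ↑t) with hq
    have hqmem : q ∈ bset x \ ↑t := Nat.sInf_mem hne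
    obtain ⟨k, hkM, hak⟩ : q ∈ a '' M := by
      rcases hxsub hqmem.1 with h | h
      · exact absurd h hqmem.2
      · exact h
    refine hkM ⟨hxinf, ?_, ?_⟩
    · intro m hm
      rcases Finset.mem_insert.mp hm with rfl | hm
      · rw [hak]; exact hqmem.1
      · exact hxt hm
    · intro m hm
      by_cases hmt : m ∈ t
      · exact Or.inl (Finset.mem_coe.mpr (Finset.mem_insert_of_mem hmt))
      · have hmq : q ≤ m := Nat.sInf_le ⟨hm, hmt⟩
        rcases eq_or_lt_of_le hmq with rfl | hlt
        · exact Or.inl (by simp [← hak])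
        · obtain ⟨j, hjM, haj⟩ : m ∈ a '' M := by
            rcases hxsub hm with h | h
            · exact absurd h hmt
            · exact h
          right
          rw [← haj]
          refine hjk j k ?_
          rw [← hak, ← haj] at hlt
          exact hmono.lt_iff_lt.mp hlt

lemma reject_fusion (U : Set (ℕ → Bool)) {A : Set ℕ} (s : Finset ℕ) (hA : A.Infinite)
    (hrej : rejects U s A) :
    ∃ D ⊆ A, D.Infinite ∧ ∀ (t : Finset ℕ) (b : ℕ), s ⊆ t → (↑t \ ↑s : Set ℕ) ⊆ D → b ∈ D →
      (∀ m ∈ t, m ≤ b) → rejects U t (D ∩ Ioi b) := by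
  classical
  set A₁ := A ∩ Ioi (s.sup id) with hA₁
  have hA₁inf : A₁.Infinite := inter_Ioi_infinite hA _
  have hs₁ : ∀ m ∈ s, ∀ x ∈ A₁, m < x := by
    intro m hm x hx
    exact lt_of_le_of_lt (Finset.le_sup (f := id) hm) hx.2
  set Inv : Finset ℕ × Set ℕ → Prop := fun p =>
    p.2.Infinite ∧ p.2 ⊆ A₁ ∧ s ⊆ p.1 ∧
    (∀ t : Finset ℕ, s ⊆ t → t ⊆ p.1 → rejects U t p.2) ∧
    (∀ m ∈ p.1, ∀ x ∈ p.2, m < x) with hInvdef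
  set R : Finset ℕ × Set ℕ → Finset ℕ × Set ℕ → Prop := fun p q =>
    ∃ c, c ∈ p.2 ∧ q.1 = insert c p.1 ∧ q.2 ⊆ p.2 ∩ Ioi c with hRdef
  have step : ∀ p, Inv p → ∃ q, R p q ∧ Inv q := by
    rintro ⟨F, A'⟩ ⟨hinf, hsubA, hsF, hrejF, hord⟩
    obtain ⟨B, hBA, hBinf, hB⟩ := extend_reject U hinf (F.powerset.filter (s ⊆ ·))
      (by intro t ht
          simp only [Finset.mem_filter, Finset.mem_powerset] at ht
          exact hrejF t ht.2 ht.1)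
    set c := sInf B with hc
    have hcB : c ∈ B := Nat.sInf_mem hBinf.nonempty
    refine ⟨(insert c F, B ∩ Ioi c), ⟨c, hBA hcB, rfl, inter_subset_inter_left _ hBA⟩, inter_Ioi_infinite hBinf c,
      (inter_subset_left.trans hBA).trans hsubA, hsF.trans (Finset.subset_insert c F), ?_, ?_⟩
    · intro t hst htF
      by_cases hct : c ∈ t
      · have ht0 : t.erase c ∈ F.powerset.filter (s ⊆ ·) := by
          simp only [Finset.mem_filter, Finset.mem_powerset]
          constructor
          · exact Finset.subset_insert_iff.mp htF
          · intro m hm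
            refine Finset.mem_erase.mpr ⟨?_, hst hm⟩
            exact Nat.ne_of_lt (hord m (hsF hm) c (hBA hcB))
        have := hB c hcB (t.erase c) ht0
        rwa [Finset.insert_erase hct] at this
      · refine rejects_mono ?_ (hrejF t hst (fun m hm => ?_))
        · exact inter_subset_left.trans hBA
        · rcases Finset.mem_insert.mp (htF hm) with rfl | h
          · exact absurd hm hct
          · exact h
    · intro m hm x hx
      rcases Finset.mem_insert.mp hm with rfl | hm
      · exact hx.2
      · exact hord m hm x (hBA hx.1)
  obtain ⟨f, hf0, hInv, hR⟩ := exists_chain Inv R (s, A₁)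
    ⟨hA₁inf, subset_rfl, subset_rfl,
     (by intro t hst hts
         have : t = s := subset_antisymm hts hst
         subst this
         exact rejects_mono inter_subset_left hrej),
     (fun m hm x hx => hs₁ m hm x hx)⟩ step
  choose a hamem haF hasub using hR
  have hsubf : ∀ n, (f (n+1)).2 ⊆ (f n).2 := fun n => (hasub n).trans inter_subset_left
  have chain : ∀ k j, k ≤ j → (f j).2 ⊆ (f k).2 := by
    intro k j hkj
    induction j, hkj using Nat.le_induction with
    | base => exact subset_rfl
    | succ n hn ih => exact (hsubf n).trans ih
  have chainF : ∀ k j, k ≤ j → (f k).1 ⊆ (f j).1 := by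
    intro k j hkj
    induction j, hkj using Nat.le_induction with
    | base => exact Finset.Subset.refl _
    | succ n hn ih => exact ih.trans (by rw [haF n]; exact Finset.subset_insert _ _)
  have hmono : StrictMono a := by
    apply strictMono_nat_of_lt_succ
    intro n
    exact ((hasub n) (hamem (n+1))).2
  have haA₁ : ∀ n, a n ∈ A₁ := fun n => (hInv n).2.1 (hamem n)
  have haFmem : ∀ n, a n ∈ (f (n+1)).1 := by
    intro n; rw [haF n]; exact Finset.mem_insert_self _ _
  refine ⟨range a, ?_, infinite_range_of_injective hmono.injective, ?_⟩
  · rintro x ⟨k, rfl⟩; exact inter_subset_left (haA₁ k)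
  · rintro t b hst htD hbD hble
    obtain ⟨k, rfl⟩ := hbD
    have htF : t ⊆ (f (k+1)).1 := by
      intro m hm
      by_cases hms : m ∈ s
      · exact chainF 0 (k+1) (Nat.zero_le _) (hf0 ▸ hms)
      · obtain ⟨i, hi⟩ := htD ⟨hm, hms⟩
        have : i ≤ k := hmono.le_iff_le.mp (by rw [hi]; exact hble m hm)
        exact chainF (i+1) (k+1) (Nat.succ_le_succ this) (hi ▸ haFmem i)
    have hrejt : rejects U t (f (k+1)).2 := (hInv (k+1)).2.2.2.1 t hst htF
    refine rejects_mono ?_ hrejt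
    rintro x ⟨⟨j, rfl⟩, hx⟩
    have : k < j := hmono.lt_iff_lt.mp hx
    exact chain (k+1) j this (hamem j)

def CR (U : Set (ℕ → Bool)) : Prop :=
  ∀ (s : Finset ℕ) (A : Set ℕ), A.Infinite →
    ∃ B ⊆ A, B.Infinite ∧ (cube s B ⊆ U ∨ cube s B ∩ U = ∅)

lemma isOpen_CR {U : Set (ℕ → Bool)} (hU : IsOpen U) : CR U := by
  classical
  intro s A hA
  obtain ⟨B₁, hB₁A, hB₁inf, hdec⟩ := decide_one U s hA
  rcases hdec with hacc | hrej
  · exact ⟨B₁, hB₁A, hB₁inf, Or.inl hacc⟩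
  obtain ⟨D, hDB, hDinf, hprop⟩ := reject_fusion U s hB₁inf hrej
  refine ⟨D, hDB.trans hB₁A, hDinf, Or.inr ?_⟩
  rw [Set.eq_empty_iff_forall_notMem]
  rintro x ⟨hxcube, hxU⟩
  obtain ⟨hxinf, hxs, hxsub⟩ := hxcube
  obtain ⟨I, u, hu, hpi⟩ := isOpen_pi_iff.mp hU x hxU
  obtain ⟨b, hbD, hbgt⟩ := hDinf.exists_gt (I.sup id ⊔ s.sup id)
  have hIb : ∀ i ∈ I, i ≤ b := fun i hi =>
    le_of_lt (lt_of_le_of_lt (le_sup_of_le_left (Finset.le_sup (f := id) hi)) hbgt)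
  have hsb : ∀ i ∈ s, i ≤ b := fun i hi =>
    le_of_lt (lt_of_le_of_lt (le_sup_of_le_right (Finset.le_sup (f := id) hi)) hbgt)
  set t : Finset ℕ := ((Set.finite_Iic b).subset (inter_subset_right (s := bset x))).toFinset
    with htdef
  have htmem : ∀ m, m ∈ t ↔ m ∈ bset x ∧ m ≤ b := by
    intro m; rw [htdef]; simp [Set.mem_Iic]
  have hst : s ⊆ t := fun m hm => (htmem m).mpr ⟨hxs hm, hsb m hm⟩
  have h1 : (↑t \ ↑s : Set ℕ) ⊆ D := by
    rintro m ⟨hmt, hms⟩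
    rcases hxsub ((htmem m).mp hmt).1 with h | h
    · exact absurd h hms
    · exact h
  have hrejt := hprop t b hst h1 hbD (fun m hm => ((htmem m).mp hm).2)
  refine hrejt (D ∩ Ioi b) subset_rfl (inter_Ioi_infinite hDinf b) ?_
  rintro y ⟨hyinf, hyt, hysub⟩
  refine hpi ?_
  rw [Set.mem_pi]
  intro i hi
  have hyx : y i = x i := by
    have h2 : i ∈ bset y ↔ i ∈ t := by
      constructor
      · intro h
        rcases hysub h with h' | h'
        · exact h'
        · exact absurd h'.2 (not_lt.mpr (hIb i hi))
      · exact fun h => hyt h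
    have h3 : i ∈ bset x ↔ i ∈ t := by
      rw [htmem i]
      exact ⟨fun h => ⟨h, hIb i hi⟩, fun h => h.1⟩
    have : (y i = true) ↔ (x i = true) := by
      change i ∈ bset y ↔ i ∈ bset x at *
      rw [h2, h3]
    exact Bool.coe_iff_coe.mp this
  rw [hyx]
  exact (hu i hi).2

lemma homog_finset (V : ℕ → Set (ℕ → Bool)) (hV : ∀ m, CR (V m))
    (P : Finset (Finset ℕ × ℕ)) {A : Set ℕ} (hA : A.Infinite) :
    ∃ B ⊆ A, B.Infinite ∧ ∀ p ∈ P, cube p.1 B ⊆ V p.2 ∨ cube p.1 B ∩ V p.2 = ∅ := by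
  classical
  induction P using Finset.induction_on with
  | empty => exact ⟨A, subset_rfl, hA, by simp⟩
  | @insert p P hnot ih =>
    obtain ⟨B, hBA, hBinf, hB⟩ := ih
    obtain ⟨C, hCB, hCinf, hC⟩ := hV p.2 p.1 B hBinf
    refine ⟨C, hCB.trans hBA, hCinf, ?_⟩
    intro q hq
    rcases Finset.mem_insert.mp hq with rfl | hq
    · exact hC
    · rcases hB q hq with h | h
      · exact Or.inl ((cube_mono hCB q.1).trans h)
      · refine Or.inr (Set.eq_empty_iff_forall_notMem.mpr ?_)
        rintro x ⟨hx1, hx2⟩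
        exact Set.eq_empty_iff_forall_notMem.mp h x ⟨cube_mono hCB q.1 hx1, hx2⟩

lemma fusion (V : ℕ → Set (ℕ → Bool)) (hV : ∀ m, CR (V m)) {A : Set ℕ} (s : Finset ℕ)
    (hA : A.Infinite) (hs : ∀ m ∈ s, ∀ x ∈ A, m < x) :
    ∃ a : ℕ → ℕ, StrictMono a ∧ (∀ k, a k ∈ A) ∧ ∃ Rs : ℕ → Set ℕ,
      (∀ k, range a ∩ Ioi (a k) ⊆ Rs k) ∧
      (∀ (k : ℕ) (t : Finset ℕ) (m : ℕ), s ⊆ t → (↑t : Set ℕ) ⊆ ↑s ∪ (range a ∩ Iic (a k)) →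
        m ≤ k → (cube t (Rs k) ⊆ V m ∨ cube t (Rs k) ∩ V m = ∅)) := by
  classical
  set Inv : ℕ × Finset ℕ × Set ℕ → Prop := fun p =>
    p.2.2.Infinite ∧ p.2.2 ⊆ A ∧ s ⊆ p.2.1 ∧ (∀ m ∈ p.2.1, ∀ x ∈ p.2.2, m < x) ∧
    (∀ t : Finset ℕ, s ⊆ t → t ⊆ p.2.1 → ∀ m ≤ p.1,
      cube t p.2.2 ⊆ V m ∨ cube t p.2.2 ∩ V m = ∅) with hInvdef
  set R : ℕ × Finset ℕ × Set ℕ → ℕ × Finset ℕ × Set ℕ → Prop := fun p q =>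
    ∃ c, c ∈ p.2.2 ∧ q.1 = p.1 + 1 ∧ q.2.1 = insert c p.2.1 ∧ q.2.2 ⊆ p.2.2 ∩ Ioi c with hRdef
  have mk : ∀ (k : ℕ) (F : Finset ℕ) (A' : Set ℕ), A'.Infinite →
      ∃ B ⊆ A', B.Infinite ∧ ∀ t : Finset ℕ, s ⊆ t → t ⊆ F → ∀ m ≤ k,
        cube t B ⊆ V m ∨ cube t B ∩ V m = ∅ := by
    intro k F A' hinf
    obtain ⟨B, hBA, hBinf, hB⟩ := homog_finset V hV
      ((F.powerset.filter (s ⊆ ·)) ×ˢ Finset.range (k+1)) hinf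
    refine ⟨B, hBA, hBinf, ?_⟩
    intro t hst htF m hm
    exact hB (t, m) (by
      simp only [Finset.mem_product, Finset.mem_filter, Finset.mem_powerset, Finset.mem_range]
      exact ⟨⟨htF, hst⟩, Nat.lt_succ_of_le hm⟩)
  have step : ∀ p, Inv p → ∃ q, R p q ∧ Inv q := by
    rintro ⟨k, F, A'⟩ ⟨hinf, hsubA, hsF, hord, _⟩
    set c := sInf A' with hc
    have hcA : c ∈ A' := Nat.sInf_mem hinf.nonempty
    obtain ⟨B, hBA, hBinf, hB⟩ := mk (k+1) (insert c F) (A' ∩ Ioi c) (inter_Ioi_infinite hinf c)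
    refine ⟨(k+1, insert c F, B), ⟨c, hcA, rfl, rfl, hBA⟩,
      hBinf, (hBA.trans inter_subset_left).trans hsubA,
      hsF.trans (Finset.subset_insert c F), ?_, hB⟩
    intro m hm x hx
    rcases Finset.mem_insert.mp hm with rfl | hm
    · exact (hBA hx).2
    · exact hord m hm x (hBA hx).1
  obtain ⟨B₀, hB₀A, hB₀inf, hB₀⟩ := mk 0 s A hA
  obtain ⟨f, hf0, hInv, hR⟩ := exists_chain Inv R (0, s, B₀)
    ⟨hB₀inf, hB₀A, Finset.Subset.refl s, (fun m hm x hx => hs m hm x (hB₀A hx)), hB₀⟩ step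
  choose a hamem hak haF hasub using hR
  have hsubf : ∀ n, (f (n+1)).2.2 ⊆ (f n).2.2 := fun n => (hasub n).trans inter_subset_left
  have chain : ∀ k j, k ≤ j → (f j).2.2 ⊆ (f k).2.2 := by
    intro k j hkj
    induction j, hkj using Nat.le_induction with
    | base => exact subset_rfl
    | succ n hn ih => exact (hsubf n).trans ih
  have chainF : ∀ k j, k ≤ j → (f k).2.1 ⊆ (f j).2.1 := by
    intro k j hkj
    induction j, hkj using Nat.le_induction with
    | base => exact Finset.Subset.refl _
    | succ n hn ih => exact ih.trans (by rw [haF n]; exact Finset.subset_insert _ _)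
  have hmono : StrictMono a := by
    apply strictMono_nat_of_lt_succ
    intro n
    exact ((hasub n) (hamem (n+1))).2
  have haA : ∀ n, a n ∈ A := fun n => (hInv n).2.1 (hamem n)
  have haFmem : ∀ n, a n ∈ (f (n+1)).2.1 := by
    intro n; rw [haF n]; exact Finset.mem_insert_self _ _
  have hkval : ∀ n, (f n).1 = n := by
    intro n
    induction n with
    | zero => rw [hf0]
    | succ n ih => rw [hak n, ih]
  refine ⟨a, hmono, haA, fun k => (f (k+1)).2.2, ?_, ?_⟩
  · intro k
    rintro x ⟨⟨j, rfl⟩, hx⟩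
    exact chain (k+1) j (hmono.lt_iff_lt.mp hx) (hamem j)
  · intro k t m hst htsub hmk
    have htF : t ⊆ (f (k+1)).2.1 := by
      intro i hi
      rcases htsub hi with h | h
      · exact chainF 0 (k+1) (Nat.zero_le _) (by rw [hf0]; exact h)
      · obtain ⟨⟨j, rfl⟩, hj⟩ := h
        have : j ≤ k := hmono.le_iff_le.mp hj
        exact chainF (j+1) (k+1) (Nat.succ_le_succ this) (haFmem j)
    have := (hInv (k+1)).2.2.2.2 t hst htF m (by rw [hkval (k+1)]; exact Nat.le_succ_of_le hmk)
    exact this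

lemma CR_compl {U : Set (ℕ → Bool)} (h : CR U) : CR Uᶜ := by
  intro s A hA
  obtain ⟨B, hBA, hBinf, hB⟩ := h s A hA
  rcases hB with h1 | h1
  · refine ⟨B, hBA, hBinf, Or.inr (Set.eq_empty_iff_forall_notMem.mpr ?_)⟩
    rintro x ⟨hx1, hx2⟩
    exact hx2 (h1 hx1)
  · refine ⟨B, hBA, hBinf, Or.inl ?_⟩
    intro x hx hxU
    exact Set.eq_empty_iff_forall_notMem.mp h1 x ⟨hx, hxU⟩

lemma CR_empty : CR (∅ : Set (ℕ → Bool)) := by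
  intro s A hA
  exact ⟨A, subset_rfl, hA, Or.inr (Set.inter_empty _)⟩

lemma CR_iUnion {V : ℕ → Set (ℕ → Bool)} (hV : ∀ m, CR (V m)) : CR (⋃ m, V m) := by
  classical
  intro s A hA
  set A₁ := A ∩ Ioi (s.sup id) with hA₁def
  have hA₁inf : A₁.Infinite := inter_Ioi_infinite hA _
  have hs₁ : ∀ m ∈ s, ∀ x ∈ A₁, m < x := fun m hm x hx =>
    lt_of_le_of_lt (Finset.le_sup (f := id) hm) hx.2
  obtain ⟨a, hmono, haA, Rs, hRs, hhom⟩ := fusion V hV s hA₁inf hs₁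
  have hsa : ∀ m ∈ s, ∀ k, m < a k := fun m hm k => hs₁ m hm (a k) (haA k)
  set W : Set (ℕ → Bool) := ⋃ (p : Finset ℕ × ℕ × ℕ)
    (_ : (↑p.1 : Set ℕ) ⊆ Iic (a p.2.2) ∧ cube p.1 (range a ∩ Ioi (a p.2.2)) ⊆ V p.2.1),
    {x : ℕ → Bool | ∀ i ≤ a p.2.2, x i = decide (i ∈ p.1)} with hWdef
  have hWopen : IsOpen W := by
    refine isOpen_iUnion fun p => isOpen_iUnion fun _ => ?_
    have : {x : ℕ → Bool | ∀ i ≤ a p.2.2, x i = decide (i ∈ p.1)} =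
        ⋂ i ∈ Set.Iic (a p.2.2), {x : ℕ → Bool | x i = decide (i ∈ p.1)} := by
      ext x; simp [Set.mem_iInter]
    rw [this]
    refine (Set.finite_Iic _).isOpen_biInter fun i _ => ?_
    have : {x : ℕ → Bool | x i = decide (i ∈ p.1)} =
        (fun x : ℕ → Bool => x i) ⁻¹' {decide (i ∈ p.1)} := rfl
    rw [this]
    exact IsOpen.preimage (continuous_apply i) (isOpen_discrete _)
  obtain ⟨E, hED, hEinf, hE⟩ := isOpen_CR hWopen s (range a)
    (infinite_range_of_injective hmono.injective)
  have hEA : E ⊆ A := fun x hx => (inter_subset_left : A₁ ⊆ A)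
    (by obtain ⟨k, rfl⟩ := hED hx; exact haA k)
  rcases hE with hpos | hneg
  · refine ⟨E, hEA, hEinf, Or.inl ?_⟩
    intro x hx
    obtain ⟨hxinf, hxs, hxsub⟩ := hx
    obtain ⟨p, hp, hagr⟩ := Set.mem_iUnion₂.mp (hpos ⟨hxinf, hxs, hxsub⟩)
    have hxp : x ∈ cube p.1 (range a ∩ Ioi (a p.2.2)) := by
      refine ⟨hxinf, ?_, ?_⟩
      · intro i hi
        have := hagr i (hp.1 hi)
        have h' : x i = true := by simpa [Finset.mem_coe.mp hi] using this
        exact h'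
      · intro i hi
        by_cases hib : i ≤ a p.2.2
        · left
          have := hagr i hib
          rw [show x i = true from hi] at this
          exact Finset.mem_coe.mpr (of_decide_eq_true this.symm)
        · right
          push_neg at hib
          rcases hxsub hi with h | h
          · exact absurd (hsa i h p.2.2) (not_lt.mpr (le_of_lt hib))
          · exact ⟨hED h, hib⟩
    exact Set.mem_iUnion.mpr ⟨p.2.1, hp.2 hxp⟩
  · refine ⟨E, hEA, hEinf, Or.inr (Set.eq_empty_iff_forall_notMem.mpr ?_)⟩
    rintro x ⟨hxcube, hxU⟩
    obtain ⟨hxinf, hxs, hxsub⟩ := hxcube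
    obtain ⟨m, hxm⟩ := Set.mem_iUnion.mp hxU
    set t : Finset ℕ := ((Set.finite_Iic (a m)).subset
      (inter_subset_right (s := bset x))).toFinset with htdef
    have htmem : ∀ i, i ∈ t ↔ i ∈ bset x ∧ i ≤ a m := by
      intro i; rw [htdef]; simp [Set.mem_Iic]
    have hst : s ⊆ t := fun i hi => (htmem i).mpr ⟨hxs hi, le_of_lt (hsa i hi m)⟩
    have htsub : (↑t : Set ℕ) ⊆ ↑s ∪ (range a ∩ Iic (a m)) := by
      intro i hi
      obtain ⟨hix, hib⟩ := (htmem i).mp hi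
      rcases hxsub hix with h | h
      · exact Or.inl h
      · exact Or.inr ⟨hED h, hib⟩
    have hxRs : x ∈ cube t (Rs m) := by
      refine ⟨hxinf, fun i hi => ((htmem i).mp hi).1, ?_⟩
      intro i hi
      by_cases hib : i ≤ a m
      · exact Or.inl ((htmem i).mpr ⟨hi, hib⟩)
      · push_neg at hib
        rcases hxsub hi with h | h
        · exact absurd (hsa i h m) (not_lt.mpr (le_of_lt hib))
        · exact Or.inr (hRs m ⟨hED h, hib⟩)
    rcases hhom m t m hst htsub le_rfl with hcube | hcube
    · have hWx : x ∈ W := by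
        refine Set.mem_iUnion₂.mpr ⟨(t, m, m), ⟨?_, ?_⟩, ?_⟩
        · intro i hi; exact ((htmem i).mp hi).2
        · exact (cube_mono (hRs m) t).trans hcube
        · intro i hib
          by_cases hix : x i = true
          · simp [(htmem i).mpr ⟨hix, hib⟩, hix]
          · have : i ∉ t := fun h => hix ((htmem i).mp h).1
            simp [this, Bool.not_eq_true] at hix ⊢
            exact hix
      exact Set.eq_empty_iff_forall_notMem.mp hneg x ⟨⟨hxinf, hxs, hxsub⟩, hWx⟩
    · exact Set.eq_empty_iff_forall_notMem.mp hcube x ⟨hxRs, hxm⟩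

lemma measurableSet_iff_borel {U : Set (ℕ → Bool)} :
    MeasurableSet U ↔ MeasurableSet[borel (ℕ → Bool)] U := by
  rw [← BorelSpace.measurable_eq (α := ℕ → Bool)]

lemma CR_of_measurableSet {U : Set (ℕ → Bool)} (hU : MeasurableSet U) : CR U := by
  have hU' : MeasurableSet[MeasurableSpace.generateFrom {s : Set (ℕ → Bool) | IsOpen s}] U :=
    measurableSet_iff_borel.mp hU
  refine MeasurableSpace.generateFrom_induction {s : Set (ℕ → Bool) | IsOpen s}
    (fun s _ => CR s) (fun t ht _ => isOpen_CR ht) CR_empty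
    (fun t _ ht => CR_compl ht) (fun f _ hf => CR_iUnion hf) U hU'

def patchF (N : ℕ) (g : Fin N → Bool) (z : ℕ → Bool) : ℕ → Bool :=
  fun n => if h : n < N then g ⟨n, h⟩ else z n

lemma measurable_patchF (N : ℕ) (g : Fin N → Bool) : Measurable (patchF N g) := by
  refine measurable_pi_iff.mpr fun n => ?_
  by_cases h : n < N
  · simp only [patchF, h, dif_pos]
    exact measurable_const
  · simp only [patchF, h, dif_neg, not_false_iff]
    exact measurable_pi_apply n

lemma main_single {U : Set (ℕ → Bool)} (hU : MeasurableSet U) {A : Set ℕ} (hA : A.Infinite) :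
    ∃ y : ℕ → Bool, (bset y).Infinite ∧ (bset y \ A).Finite ∧
      (y ∉ U ∨ ∀ x : ℕ → Bool, (bset x).Infinite → (bset x \ bset y).Finite → x ∈ U) := by
  classical
  set C : Set (ℕ → Bool) := {z | ∀ (N : ℕ) (g : Fin N → Bool), patchF N g z ∈ U} with hCdef
  have hCmeas : MeasurableSet C := by
    have : C = ⋂ (N : ℕ) (g : Fin N → Bool), (patchF N g) ⁻¹' U := by
      ext z; simp [hCdef, Set.mem_iInter]
    rw [this]
    exact MeasurableSet.iInter fun N => MeasurableSet.iInter fun g =>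
      (measurable_patchF N g) hU
  have hCsub : C ⊆ U := by
    intro z hz
    have := hz 0 (fun i => i.elim0)
    have heq : patchF 0 (fun i => i.elim0) z = z := by
      funext n; simp [patchF]
    rwa [heq] at this
  obtain ⟨B, hBA, hBinf, hB⟩ := CR_of_measurableSet hCmeas ∅ A hA
  rcases hB with hpos | hneg
  · -- cube ∅ B ⊆ C : homogeneity case
    set y : ℕ → Bool := fun n => if n ∈ B then true else false with hydef
    have hby : bset y = B := by
      ext n; simp [bset, hydef]
    refine ⟨y, by rw [hby]; exact hBinf, by rw [hby]; simp [diff_eq_empty.mpr hBA], Or.inr ?_⟩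
    intro x hxinf hxfin
    rw [hby] at hxfin
    set z : ℕ → Bool := fun n => x n && y n with hzdef
    have hbz : bset z = bset x ∩ B := by
      ext n
      simp [bset, hzdef, Bool.and_eq_true, hydef]
    have hzinf : (bset z).Infinite := by
      rw [hbz]
      refine Set.Infinite.mono ?_ (hxinf.diff hxfin)
      rintro n ⟨hn1, hn2⟩
      exact ⟨hn1, by by_contra h; exact hn2 ⟨hn1, h⟩⟩
    have hzC : z ∈ C := hpos ⟨hzinf, by simp, by rw [hbz]; intro n hn; exact Or.inr hn.2⟩
    obtain ⟨b, hb⟩ := hxfin.bddAbove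
    have hxz : x = patchF (b+1) (fun i => x i) z := by
      funext n
      by_cases h : n < b + 1
      · simp [patchF, h]
      · simp only [patchF, h, dif_neg, not_false_iff]
        push_neg at h
        rw [hzdef]
        by_cases hx : x n = true
        · have hnB : n ∈ B := by
            by_contra hnB
            have : n ∈ bset x \ B := ⟨hx, hnB⟩
            exact absurd (hb this) (by omega)
          simp [hx, hydef, hnB]
        · simp [Bool.not_eq_true] at hx
          simp [hx]
    rw [hxz]
    exact hzC (b+1) (fun i => x i)
  · -- cube ∅ B ∩ C = ∅ : escape case
    set χ : ℕ → Bool := fun n => if n ∈ B then true else false with hχdef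
    have hbχ : bset χ = B := by ext n; simp [bset, hχdef]
    have hχcube : χ ∈ cube ∅ B := ⟨by rw [hbχ]; exact hBinf, by simp, by rw [hbχ]; simp⟩
    have hχC : χ ∉ C := fun h => Set.eq_empty_iff_forall_notMem.mp hneg χ ⟨hχcube, h⟩
    simp only [hCdef, mem_setOf_eq, not_forall] at hχC
    obtain ⟨N, g, hNg⟩ := hχC
    refine ⟨patchF N g χ, ?_, ?_, Or.inl hNg⟩
    · refine Set.Infinite.mono ?_ ((hBinf.diff (Set.finite_Iio N)))
      rintro n ⟨hnB, hnN⟩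
      simp only [bset, mem_setOf_eq, patchF]
      rw [dif_neg (by simpa using hnN)]
      simp [hχdef, hnB]
    · refine Set.Finite.subset (Set.finite_Iio N) ?_
      rintro n ⟨hn1, hn2⟩
      simp only [bset, mem_setOf_eq, patchF] at hn1
      by_contra h
      simp only [Set.mem_Iio, not_lt] at h
      rw [dif_neg (by omega)] at hn1
      simp only [hχdef] at hn1
      by_cases hnB : n ∈ B
      · exact hn2 (hBA hnB)
      · simp [hnB] at hn1

lemma pseudo {ι : Type*} [Countable ι] (A : ι → Set ℕ) (hinf : ∀ i, (A i).Infinite)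
    (hdir : ∀ i j, (A i \ A j).Finite ∨ (A j \ A i).Finite) :
    ∃ S : Set ℕ, S.Infinite ∧ ∀ i, (S \ A i).Finite := by
  classical
  rcases isEmpty_or_nonempty ι with h0 | hne
  · exact ⟨Set.univ, Set.infinite_univ, fun i => (IsEmpty.false i).elim⟩
  obtain ⟨e, he⟩ := exists_surjective_nat ι
  set Cn : ℕ → Set ℕ := fun n => ⋂ k ∈ Finset.range (n+1), A (e k) with hCndef
  have hCsub : ∀ m n, m ≤ n → Cn n ⊆ A (e m) := by
    intro m n hmn x hx
    simp only [hCndef, Set.mem_iInter] at hx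
    exact hx m (Finset.mem_range.mpr (Nat.lt_succ_of_le hmn))
  have hCanti : ∀ m n, m ≤ n → Cn n ⊆ Cn m := by
    intro m n hmn x hx
    simp only [hCndef, Set.mem_iInter] at hx ⊢
    intro k hk
    exact hx k (Finset.mem_range.mpr (lt_of_lt_of_le (Finset.mem_range.mp hk)
      (Nat.succ_le_succ hmn)))
  have hmin : ∀ n, ∃ j ≤ n, ∀ k ≤ n, (A (e j) \ A (e k)).Finite := by
    intro n
    induction n with
    | zero =>
      refine ⟨0, le_rfl, fun k hk => ?_⟩
      interval_cases k
      simp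
    | succ n ih =>
      obtain ⟨j, hj, hjh⟩ := ih
      rcases hdir (e j) (e (n+1)) with h | h
      · refine ⟨j, le_trans hj (Nat.le_succ n), fun k hk => ?_⟩
        rcases Nat.lt_succ_iff_lt_or_eq.mp (Nat.lt_succ_of_le hk) with hk' | rfl
        · exact hjh k (Nat.lt_succ_iff.mp hk')
        · exact h
      · refine ⟨n+1, le_rfl, fun k hk => ?_⟩
        rcases Nat.lt_succ_iff_lt_or_eq.mp (Nat.lt_succ_of_le hk) with hk' | rfl
        · refine Set.Finite.subset (h.union (hjh k (Nat.lt_succ_iff.mp hk'))) ?_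
          rintro x ⟨hx1, hx2⟩
          by_cases hxj : x ∈ A (e j)
          · exact Or.inr ⟨hxj, hx2⟩
          · exact Or.inl ⟨hx1, hxj⟩
        · simp
  have hCinf : ∀ n, (Cn n).Infinite := by
    intro n
    obtain ⟨j, hj, hjh⟩ := hmin n
    have hfin : (A (e j) \ Cn n).Finite := by
      have : A (e j) \ Cn n = ⋃ k ∈ Finset.range (n+1), (A (e j) \ A (e k)) := by
        ext x
        simp only [hCndef, Set.mem_diff, Set.mem_iInter, Set.mem_iUnion, not_forall]
        constructor
        · rintro ⟨hx, k, hk, hnk⟩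
          exact ⟨k, hk, hx, hnk⟩
        · rintro ⟨k, hk, hx, hnk⟩
          exact ⟨hx, k, hk, hnk⟩
      rw [this]
      exact Set.Finite.biUnion (Finset.range (n+1)).finite_toSet
        (fun k hk => hjh k (Nat.lt_succ_iff.mp (Finset.mem_range.mp hk)))
    refine Set.Infinite.mono ?_ ((hinf (e j)).diff hfin)
    rintro x ⟨hx1, hx2⟩
    by_contra h
    exact hx2 ⟨hx1, h⟩
  obtain ⟨x0, hx0⟩ := (hCinf 0).nonempty
  obtain ⟨f, hf0, hInv, hR⟩ := exists_chain (fun p : ℕ × ℕ => p.2 ∈ Cn p.1)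
    (fun p q => q.1 = p.1 + 1 ∧ p.2 < q.2) (0, x0) hx0
    (by rintro ⟨n, x⟩ hx
        obtain ⟨y, hy, hxy⟩ := (hCinf (n+1)).exists_gt x
        exact ⟨(n+1, y), ⟨rfl, hxy⟩, hy⟩)
  have hidx : ∀ n, (f n).1 = n := by
    intro n
    induction n with
    | zero => rw [hf0]
    | succ n ih => rw [(hR n).1, ih]
  set x : ℕ → ℕ := fun n => (f n).2 with hxdef
  have hxmono : StrictMono x := strictMono_nat_of_lt_succ (fun n => (hR n).2)
  have hxC : ∀ n, x n ∈ Cn n := by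
    intro n
    have h := hInv n
    rwa [hidx n] at h
  refine ⟨range x, infinite_range_of_injective hxmono.injective, ?_⟩
  intro i
  obtain ⟨m, rfl⟩ := he i
  refine Set.Finite.subset ((Set.finite_Iio m).image x) ?_
  rintro n ⟨⟨k, rfl⟩, hk⟩
  refine ⟨k, ?_, rfl⟩
  by_contra h
  simp only [Set.mem_Iio, not_lt] at h
  exact hk (hCsub m k h (hxC k))

lemma thin {A : Set ℕ} (hA : A.Infinite) :
    ∃ A' ⊆ A, A'.Infinite ∧ (A \ A').Infinite := by
  classical
  have hA' : {n | n ∈ A}.Infinite := hA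
  set a : ℕ → ℕ := Nat.nth (· ∈ A) with hadef
  have hmono : StrictMono a := Nat.nth_strictMono hA'
  have hmem : ∀ k, a k ∈ A := fun k => Nat.nth_mem_of_infinite hA' k
  refine ⟨range (fun k => a (2*k)), by rintro n ⟨k, rfl⟩; exact hmem _,
    infinite_range_of_injective (fun i j hij => by
      have := hmono.injective hij; omega), ?_⟩
  refine Set.Infinite.mono ?_ (infinite_range_of_injective
    (f := fun k => a (2*k+1)) (fun i j hij => by have := hmono.injective hij; omega))
  rintro n ⟨k, rfl⟩
  refine ⟨hmem _, ?_⟩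
  rintro ⟨j, hj⟩
  have := hmono.injective hj
  omega

lemma countable_Iio_ordinal {α : Ordinal.{0}} (h : α < (Cardinal.aleph 1).ord) :
    Countable (Set.Iio α) := by
  rw [Set.countable_coe_iff, Cardinal.countable_iff_lt_aleph_one, Ordinal.mk_Iio_ordinal]
  have h1 : α.card < Cardinal.aleph 1 := Cardinal.lt_ord.mp h
  have h2 := Cardinal.lift_lt.mpr h1
  rwa [Cardinal.lift_aleph, Ordinal.lift_one] at h2

def specP (B : Ordinal.{0} → Set (ℕ → Bool)) (α : Ordinal.{0})
    (prev : ∀ β, β < α → (ℕ → Bool)) (y : ℕ → Bool) : Prop :=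
  (bset y).Infinite ∧
  (∀ β (h : β < α), (bset y \ bset (prev β h)).Finite ∧ (bset (prev β h) \ bset y).Infinite) ∧
  (y ∉ B α ∨ ∀ x : ℕ → Bool, (bset x).Infinite → (bset x \ bset y).Finite → x ∈ B α)

lemma spec_exists (B : Ordinal.{0} → Set (ℕ → Bool)) (α : Ordinal.{0})
    (hmeas : MeasurableSet (B α)) (hc : Countable (Set.Iio α))
    (prev : ∀ β, β < α → (ℕ → Bool))
    (hprevinf : ∀ β (h : β < α), (bset (prev β h)).Infinite)
    (hchain : ∀ β γ (h1 : β < γ) (h2 : γ < α),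
      (bset (prev γ h2) \ bset (prev β (h1.trans h2))).Finite) :
    ∃ y, specP B α prev y := by
  classical
  obtain ⟨S, hSinf, hS⟩ := pseudo (ι := Set.Iio α) (fun i => bset (prev i.1 i.2))
    (fun i => hprevinf i.1 i.2)
    (by rintro ⟨β, hβ⟩ ⟨γ, hγ⟩
        rcases lt_trichotomy β γ with h | rfl | h
        · exact Or.inr (hchain β γ h hγ)
        · simp
        · exact Or.inl (hchain γ β h hβ))
  obtain ⟨A', hA'S, hA'inf, hdiff⟩ := thin hSinf
  obtain ⟨y, hyinf, hyfin, hdisj⟩ := main_single hmeas hA'inf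
  refine ⟨y, hyinf, ?_, hdisj⟩
  intro β hβ
  have hSβ : (S \ bset (prev β hβ)).Finite := hS ⟨β, hβ⟩
  constructor
  · refine Set.Finite.subset (hyfin.union hSβ) ?_
    rintro x ⟨hx1, hx2⟩
    by_cases hxA : x ∈ A'
    · exact Or.inr ⟨hA'S hxA, hx2⟩
    · exact Or.inl ⟨hx1, hxA⟩
  · have hT : ((S \ A') ∩ bset (prev β hβ)).Infinite := by
      have : (S \ A') \ ((S \ A') \ bset (prev β hβ)) ⊆ (S \ A') ∩ bset (prev β hβ) := by
        rintro x ⟨hx1, hx2⟩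
        refine ⟨hx1, ?_⟩
        by_contra h
        exact hx2 ⟨hx1, h⟩
      refine Set.Infinite.mono this (hdiff.diff ?_)
      exact Set.Finite.subset hSβ (fun x hx => ⟨hx.1.1, hx.2⟩)
    refine Set.Infinite.mono ?_ (hT.diff hyfin)
    rintro x ⟨⟨⟨hxS, hxA⟩, hxprev⟩, hxy⟩
    refine ⟨hxprev, ?_⟩
    intro hxin
    exact hxy ⟨hxin, hxA⟩

noncomputable def Yseq (B : Ordinal.{0} → Set (ℕ → Bool)) : Ordinal.{0} → (ℕ → Bool) :=
  WellFounded.fix Ordinal.lt_wf (fun α ih => Classical.epsilon (specP B α ih))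

lemma spec_holds (B : Ordinal.{0} → Set (ℕ → Bool))
    (hB : ∀ α < (Cardinal.aleph 1).ord, MeasurableSet[borel (ℕ → Bool)] (B α)) :
    ∀ α, α < (Cardinal.aleph 1).ord →
      specP B α (fun β _ => Yseq B β) (Yseq B α) := by
  intro α
  induction α using Ordinal.induction with
  | h α IH =>
    intro hα
    have hfix : Yseq B α = Classical.epsilon (specP B α (fun β _ => Yseq B β)) := by
      rw [Yseq, WellFounded.fix_eq]
    rw [hfix]
    exact Classical.epsilon_spec (spec_exists B α (measurableSet_iff_borel.mpr (hB α hα))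
      (countable_Iio_ordinal hα) (fun β _ => Yseq B β)
      (fun β h => (IH β h (h.trans hα)).1)
      (fun β γ h1 h2 => ((IH γ h2 (h2.trans hα)).2.1 β h1).1))

end GPaux

/-- For every `ω₁`-sequence of Borel subsets of `[ω]^ω` there is a `⊆*`-decreasing
(and strictly decreasing mod finite) `ω₁`-sequence of infinite subsets of `ℕ`
such that for each `α`, either `y_α ∉ B_α` or `[y_α]^{*ω} ⊆ B_α`. -/
theorem stmt12 (B : Ordinal.{0} → Set (ℕ → Bool))
    (hB : ∀ α < (Cardinal.aleph 1).ord,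
      MeasurableSet[borel (ℕ → Bool)] (B α) ∧ ∀ x ∈ B α, (bset x).Infinite) :
    ∃ y : Ordinal.{0} → (ℕ → Bool),
      (∀ α < (Cardinal.aleph 1).ord, (bset (y α)).Infinite) ∧
      (∀ α β : Ordinal.{0}, α < β → β < (Cardinal.aleph 1).ord →
        (bset (y β) \ bset (y α)).Finite ∧ (bset (y α) \ bset (y β)).Infinite) ∧
      (∀ α < (Cardinal.aleph 1).ord,
        y α ∉ B α ∨
        ∀ x : ℕ → Bool, (bset x).Infinite → (bset x \ bset (y α)).Finite → x ∈ B α) := by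
  have hmeas : ∀ α < (Cardinal.aleph 1).ord, MeasurableSet[borel (ℕ → Bool)] (B α) :=
    fun α hα => (hB α hα).1
  refine ⟨GPaux.Yseq B, ?_, ?_, ?_⟩
  · exact fun α hα => (GPaux.spec_holds B hmeas α hα).1
  · exact fun α β hαβ hβ => (GPaux.spec_holds B hmeas β hβ).2.1 α hαβ
  · exact fun α hα => (GPaux.spec_holds B hmeas α hα).2.2
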